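/- If A ∈ ℝ^{n×n} satisfies σ_n(A + I) > 2, then the AVE Ax + |x| = b has a unique solution for every b ∈ ℝ^n. -/

import Mathlib

open Matrix

/-- A square real matrix is a `P`-matrix if all of its principal minors are positive. -/
def IsPMatrix {n : ℕ} (M : Matrix (Fin n) (Fin n) ℝ) : Prop :=
  ∀ s : Finset (Fin n), s.Nonempty →
    0 < (M.submatrix (fun i : s => (i : Fin n)) (fun i : s => (i : Fin n))).det

/-- The (unordered) singular values of a real square matrix: square roots of the
eigenvalues of `Aᵀ * A`. -/
noncomputable def singVals {n : ℕ} (A : Matrix (Fin n) (Fin n) ℝ) : Fin n → ℝ :=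
  fun i => Real.sqrt ((show (Aᵀ * A).IsHermitian by
    rw [← Matrix.conjTranspose_eq_transpose_of_trivial]
    exact Matrix.isHermitian_conjTranspose_mul_self A).eigenvalues i)

/-- `svalsDecr A i` is the `i`-th largest singular value of `A` (so `svalsDecr A 0 = σ₁`). -/
noncomputable def svalsDecr {n : ℕ} (A : Matrix (Fin n) (Fin n) ℝ) : Fin n → ℝ :=
  fun i => singVals A (Tuple.sort (singVals A) (Fin.rev i))

/-- The maximal singular value `σ₁`. -/
noncomputable def maxSV {n : ℕ} (A : Matrix (Fin n) (Fin n) ℝ) : ℝ :=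
  ⨆ i, singVals A i

/-- The minimal singular value `σₙ`. -/
noncomputable def minSV {n : ℕ} (A : Matrix (Fin n) (Fin n) ℝ) : ℝ :=
  ⨅ i, singVals A i

/-- The spectral radius of a real square matrix (as the spectral radius of its
complexification), valued in `ℝ≥0∞`. -/
noncomputable def specRad {n : ℕ} (A : Matrix (Fin n) (Fin n) ℝ) : ENNReal :=
  spectralRadius ℂ (A.map (Complex.ofReal))


lemma rayleigh_lower {n : ℕ} (M : Matrix (Fin n) (Fin n) ℝ) (hM : M.IsHermitian) (c : ℝ)
    (hc : ∀ i, c ≤ hM.eigenvalues i) (hc0 : 0 ≤ c) (x : EuclideanSpace ℝ (Fin n)) :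
    c * ‖x‖^2 ≤ inner ℝ x (Matrix.toEuclideanLin M x) := by
  have hsym : (Matrix.toEuclideanLin M).IsSymmetric :=
    (Matrix.isHermitian_iff_isSymmetric).1 hM
  set v := hM.eigenvectorBasis with hv
  have hMv : ∀ i, Matrix.toEuclideanLin M (v i) = hM.eigenvalues i • (v i) := by
    intro i
    have := hM.mulVec_eigenvectorBasis i
    ext j
    simpa [Matrix.toEuclideanLin_apply] using congrFun this j
  have h1 : (inner ℝ x (Matrix.toEuclideanLin M x) : ℝ)
      = ∑ i, hM.eigenvalues i * (inner ℝ x (v i) : ℝ)^2 := by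
    rw [← v.sum_inner_mul_inner x (Matrix.toEuclideanLin M x)]
    congr 1
    ext i
    have : (inner ℝ (v i) (Matrix.toEuclideanLin M x) : ℝ)
        = inner ℝ (Matrix.toEuclideanLin M (v i)) x := (hsym _ _).symm
    rw [this, hMv i, real_inner_smul_left, real_inner_comm (v i) x]
    ring
  have h2 : (‖x‖^2 : ℝ) = ∑ i, (inner ℝ x (v i) : ℝ)^2 := by
    rw [← real_inner_self_eq_norm_sq, ← v.sum_inner_mul_inner x x]
    congr 1; ext i; rw [real_inner_comm (v i) x]; ring
  rw [h1, h2, Finset.mul_sum]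
  exact Finset.sum_le_sum fun i _ => by
    have := sq_nonneg (inner ℝ x (v i) : ℝ)
    exact mul_le_mul_of_nonneg_right (hc i) this

lemma sv_lower {n : ℕ} (B : Matrix (Fin n) (Fin n) ℝ) (hpos : 0 ≤ minSV B)
    (x : EuclideanSpace ℝ (Fin n)) :
    minSV B * ‖x‖ ≤ ‖Matrix.toEuclideanLin B x‖ := by
  have hH : (Bᵀ * B).IsHermitian := by
    rw [← Matrix.conjTranspose_eq_transpose_of_trivial]
    exact Matrix.isHermitian_conjTranspose_mul_self B
  have hc : ∀ i, (minSV B)^2 ≤ hH.eigenvalues i := by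
    intro i
    have h1 : minSV B ≤ Real.sqrt (hH.eigenvalues i) :=
      ciInf_le (Set.Finite.bddBelow (Set.finite_range _)) i
    have h2 : 0 ≤ hH.eigenvalues i :=
      Matrix.eigenvalues_conjTranspose_mul_self_nonneg B i
    nlinarith [Real.sq_sqrt h2, Real.sqrt_nonneg (hH.eigenvalues i)]
  have key : (inner ℝ x (Matrix.toEuclideanLin (Bᵀ * B) x) : ℝ)
      = ‖Matrix.toEuclideanLin B x‖^2 := by
    rw [← real_inner_self_eq_norm_sq]
    simp only [Matrix.toEuclideanLin_apply, PiLp.inner_apply, RCLike.inner_apply,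
      conj_trivial]
    have : ((WithLp.equiv 2 (Fin n → ℝ)) x) ⬝ᵥ ((Bᵀ * B) *ᵥ (WithLp.equiv 2 (Fin n → ℝ)) x)
        = (B *ᵥ (WithLp.equiv 2 (Fin n → ℝ)) x) ⬝ᵥ (B *ᵥ (WithLp.equiv 2 (Fin n → ℝ)) x) := by
      rw [← Matrix.mulVec_mulVec, Matrix.dotProduct_mulVec, Matrix.vecMul_transpose]
    simpa [dotProduct, mul_comm] using this
  have hr := rayleigh_lower (Bᵀ * B) hH ((minSV B)^2) hc (by positivity) x
  rw [key] at hr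
  nlinarith [norm_nonneg (Matrix.toEuclideanLin B x), norm_nonneg x,
    mul_nonneg hpos (norm_nonneg x)]

set_option maxHeartbeats 1000000 in
theorem stmt17 {n : ℕ} (A : Matrix (Fin n) (Fin n) ℝ) (h : 2 < minSV (A + 1)) :
    ∀ b : Fin n → ℝ, ∃! x : Fin n → ℝ, A *ᵥ x + |x| = b := by
  intro b
  set B := A + 1 with hB
  have hpos : (0:ℝ) < minSV B := by linarith
  set T := Matrix.toEuclideanLin B with hT
  have hlow : ∀ x : EuclideanSpace ℝ (Fin n), minSV B * ‖x‖ ≤ ‖T x‖ :=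
    fun x => sv_lower B hpos.le x
  have hinj : Function.Injective T := by
    rw [← LinearMap.ker_eq_bot, LinearMap.ker_eq_bot']
    intro m hm
    have := hlow m
    rw [hm, norm_zero] at this
    have : ‖m‖ = 0 := le_antisymm (by nlinarith [norm_nonneg m]) (norm_nonneg m)
    exact norm_eq_zero.mp this
  have hbij : Function.Bijective T := ⟨hinj, LinearMap.injective_iff_surjective.mp hinj⟩
  let e : EuclideanSpace ℝ (Fin n) ≃ₗ[ℝ] EuclideanSpace ℝ (Fin n) :=
    LinearEquiv.ofBijective T hbij
  have he : ∀ x, e x = T x := fun _ => rfl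
  -- g x = |x| - x componentwise
  let g : EuclideanSpace ℝ (Fin n) → EuclideanSpace ℝ (Fin n) :=
    fun x => WithLp.toLp 2 (fun i => |x i| - x i : Fin n → ℝ)
  let b' : EuclideanSpace ℝ (Fin n) := WithLp.toLp 2 b
  let F : EuclideanSpace ℝ (Fin n) → EuclideanSpace ℝ (Fin n) :=
    fun x => e.symm (b' - g x)
  have hg : ∀ x y, ‖g x - g y‖ ≤ 2 * ‖x - y‖ := by
    intro x y
    have h2 : (2:ℝ) * ‖x - y‖ = ‖(2:ℝ) • (x - y)‖ := by
      rw [norm_smul]; simp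
    rw [h2, EuclideanSpace.norm_eq, EuclideanSpace.norm_eq]
    apply Real.sqrt_le_sqrt
    apply Finset.sum_le_sum
    intro i _
    have hgi : (g x - g y) i = (|x i| - x i) - (|y i| - y i) := by
      simp [g, PiLp.sub_apply]
    have hsi : ((2:ℝ) • (x - y)) i = 2 * (x i - y i) := by
      simp [PiLp.smul_apply, PiLp.sub_apply]
    rw [hgi, hsi]
    simp only [Real.norm_eq_abs]
    have habs : |(|x i| - x i) - (|y i| - y i)| ≤ 2 * |x i - y i| := by
      have t1 : |(|x i| - |y i|)| ≤ |x i - y i| := abs_abs_sub_abs_le_abs_sub _ _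
      have t2 : (|x i| - x i) - (|y i| - y i) = (|x i| - |y i|) - (x i - y i) := by ring
      rw [t2]
      calc |(|x i| - |y i|) - (x i - y i)| ≤ |(|x i| - |y i|)| + |x i - y i| := abs_sub _ _
        _ ≤ 2 * |x i - y i| := by linarith
    have hm2 : |2 * (x i - y i)| = 2 * |x i - y i| := by
      rw [abs_mul]; norm_num
    rw [hm2]
    nlinarith [abs_nonneg ((|x i| - x i) - (|y i| - y i)), abs_nonneg (x i - y i)]
  have hesymm : ∀ z, ‖e.symm z‖ ≤ (minSV B)⁻¹ * ‖z‖ := by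
    intro z
    have := hlow (e.symm z)
    have hez : T (e.symm z) = z := e.apply_symm_apply z
    rw [hez] at this
    rw [inv_mul_eq_div, le_div_iff₀ hpos]
    calc ‖e.symm z‖ * minSV B = minSV B * ‖e.symm z‖ := mul_comm _ _
      _ ≤ ‖z‖ := this
  set K : ℝ := 2 / minSV B with hK
  have hK0 : 0 ≤ K := by positivity
  have hK1 : K < 1 := by rw [hK, div_lt_one hpos]; linarith
  have hlip : LipschitzWith (⟨K, hK0⟩ : NNReal) F := by
    apply LipschitzWith.of_dist_le_mul
    intro x y
    rw [dist_eq_norm, dist_eq_norm]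
    have hFxy : F x - F y = e.symm (g y - g x) := by
      simp only [F, ← map_sub]
      congr 1
      abel
    rw [hFxy]
    calc ‖e.symm (g y - g x)‖ ≤ (minSV B)⁻¹ * ‖g y - g x‖ := hesymm _
      _ ≤ (minSV B)⁻¹ * (2 * ‖y - x‖) := by
          apply mul_le_mul_of_nonneg_left (hg y x) (by positivity)
      _ = K * ‖x - y‖ := by rw [norm_sub_rev y x, hK]; field_simp
  have hcontr : ContractingWith ⟨K, hK0⟩ F := ⟨by exact_mod_cast hK1, hlip⟩
  have hiff : ∀ x : EuclideanSpace ℝ (Fin n),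
      (A *ᵥ (WithLp.equiv 2 (Fin n → ℝ) x) + |(WithLp.equiv 2 (Fin n → ℝ)) x| = b)
        ↔ F x = x := by
    intro x
    set x' : Fin n → ℝ := (WithLp.equiv 2 (Fin n → ℝ)) x with hx'
    have hcomp : ∀ i, (e x) i = (A *ᵥ x') i + x' i := by
      intro i
      have h0 : (e x) i = (B *ᵥ x') i := rfl
      rw [h0, hB, Matrix.add_mulVec, Matrix.one_mulVec, Pi.add_apply]
    have hsub : ∀ i, (b' - g x) i = b i - (|x' i| - x' i) := fun i => rfl
    constructor
    · intro hx
      have key : e x = b' - g x := by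
        ext i
        rw [hcomp i, hsub i]
        have h1 := congrFun hx i
        simp only [Pi.add_apply, Pi.abs_apply] at h1
        linarith
      show e.symm (b' - g x) = x
      rw [← key, e.symm_apply_apply]
    · intro hx
      have key : e x = b' - g x := by
        conv_lhs => rw [← hx]
        exact e.apply_symm_apply _
      funext i
      have h1 := congrFun (congrArg WithLp.ofLp key) i
      rw [hcomp i, hsub i] at h1
      simp only [Pi.add_apply, Pi.abs_apply]
      linarith
  refine ⟨(WithLp.equiv 2 (Fin n → ℝ)) (hcontr.fixedPoint F), ?_, ?_⟩
  · exact (hiff _).mpr (by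
      exact hcontr.fixedPoint_isFixedPt)
  · intro y hy
    have hy' : F ((WithLp.equiv 2 (Fin n → ℝ)).symm y) = (WithLp.equiv 2 (Fin n → ℝ)).symm y :=
      (hiff ((WithLp.equiv 2 (Fin n → ℝ)).symm y)).mp (by simpa using hy)
    have := hcontr.fixedPoint_unique (x := (WithLp.equiv 2 (Fin n → ℝ)).symm y) hy'
    calc y = (WithLp.equiv 2 (Fin n → ℝ)) ((WithLp.equiv 2 (Fin n → ℝ)).symm y) := rfl
      _ = (WithLp.equiv 2 (Fin n → ℝ)) (hcontr.fixedPoint F) := by rw [this]
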